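/- In an acyclic connected component of the state transition graph of a planar or toric trinity, if two paths connect the same pair of states, then the algebraic multiplicity (exponent sum of clockwise minus counter-clockwise moves) of each black triangle is the same along the two paths. -/

import Mathlib

/-!  Combinatorial trinities, Tutte matchings (states), and clock moves,
following Hine and Kálmán, "Clock theorems for triangulated surfaces".

A trinity is encoded combinatorially: `Vertex` is the set of vertices, properly
colored by `vcol` with colors `Fin 3` (0 = red, 1 = green, 2 = blue); `White`
and `Black` are the sets of white and black triangles.  Each triangle has one
vertex of each color (`wvert`, `bvert`) and one edge of each color (the edge of
color `c` being opposite the vertex of color `c`); across its edge of color `c`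
a white triangle `w` meets the black triangle `wadj w c`, and a black triangle
`b` meets the white triangle `badj b c`.  The two triangles sharing an edge of
color `c` share their vertices of the other two colors (`bvert_wadj`).
A planar trinity carries a distinguished outer white triangle (`outer = some o`);
for a toric trinity `outer = none`. -/

structure Trinity where
  Vertex : Type
  White : Type
  Black : Type
  [vertexFintype : Fintype Vertex]
  [whiteFintype : Fintype White]
  [blackFintype : Fintype Black]
  [vertexDecEq : DecidableEq Vertex]
  [whiteDecEq : DecidableEq White]
  [blackDecEq : DecidableEq Black]
  outer : Option White
  vcol : Vertex → Fin 3
  wvert : White → Fin 3 → Vertex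
  bvert : Black → Fin 3 → Vertex
  wadj : White → Fin 3 → Black
  badj : Black → Fin 3 → White
  wvert_col : ∀ w c, vcol (wvert w c) = c
  bvert_col : ∀ b c, vcol (bvert b c) = c
  badj_wadj : ∀ w c, badj (wadj w c) c = w
  wadj_badj : ∀ b c, wadj (badj b c) c = b
  bvert_wadj : ∀ w c c', c' ≠ c → bvert (wadj w c) c' = wvert w c'

attribute [instance] Trinity.vertexFintype Trinity.whiteFintype Trinity.blackFintype
  Trinity.vertexDecEq Trinity.whiteDecEq Trinity.blackDecEq

namespace Trinity

variable (T : Trinity)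

/-- `w` is the outer white triangle. -/
def IsOuter (w : T.White) : Prop := T.outer = some w

instance : DecidablePred T.IsOuter := fun w => decidable_of_iff (T.outer = some w) Iff.rfl

/-- `v` is a root, i.e. a vertex of the outer white triangle (planar case). -/
def IsRoot (v : T.Vertex) : Prop := ∃ w, T.IsOuter w ∧ ∃ c, v = T.wvert w c

/-- A Tutte matching (state): a perfect matching between the non-outer white
triangles and incident non-root vertices.  (For a toric trinity, `IsOuter` and
`IsRoot` are empty conditions, so this is a perfect matching between all white
triangles and all vertices.)  The value on the outer white triangle, if any, is
irrelevant and is normalized by `outer_spec`. -/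
structure State where
  toFun : T.White → T.Vertex
  incident : ∀ w, ∃ c, toFun w = T.wvert w c
  injOn : ∀ w w', ¬ T.IsOuter w → ¬ T.IsOuter w' → toFun w = toFun w' → w = w'
  not_root : ∀ w, ¬ T.IsOuter w → ¬ T.IsRoot (toFun w)
  surj : ∀ v, ¬ T.IsRoot v → ∃ w, ¬ T.IsOuter w ∧ toFun w = v
  outer_spec : ∀ w, T.IsOuter w → toFun w = T.wvert w 0

namespace State

variable {T}

/-- The black triangle through which the arrow representing the match of the
white triangle `w` passes: the arrow of the match `(w, s w)` crosses the edge
of `w` opposite the matched vertex `s w` (the edge of color `vcol (s w)`). -/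
def arrowBlack (s : T.State) (w : T.White) : T.Black := T.wadj w (T.vcol (s.toFun w))

/-- The black triangle `b` is empty in the state `s`: no arrow passes through it. -/
def EmptyAt (s : T.State) (b : T.Black) : Prop :=
  ∀ w, ¬ T.IsOuter w → s.arrowBlack w ≠ b

/-- `b` is a clockwise empty black triangle of `s`:  it is empty and its three
vertices are matched with the three adjacent white triangles in the clockwise
rotational pattern. -/
def IsCW (s : T.State) (b : T.Black) : Prop :=
  s.EmptyAt b ∧ ∀ c, s.toFun (T.badj b c) = T.bvert b (c + 1)

/-- `b` is a counter-clockwise empty black triangle of `s`. -/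
def IsCCW (s : T.State) (b : T.Black) : Prop :=
  s.EmptyAt b ∧ ∀ c, s.toFun (T.badj b c) = T.bvert b (c + 2)

end State

/-- The basic clockwise move (clock move) about the empty black triangle `b`,
turning it from clockwise to counter-clockwise: `t` is obtained from `s` by
changing `b`. -/
def CWMoveAt (s t : T.State) (b : T.Black) : Prop :=
  s.IsCW b ∧ (∀ c, t.toFun (T.badj b c) = T.bvert b (c + 2)) ∧
    ∀ w, (∀ c, w ≠ T.badj b c) → t.toFun w = s.toFun w

/-- A walk in the state transition graph, recording for each step the black
triangle about which the move is performed and the direction of the move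
(`true` = clockwise, `false` = counter-clockwise). -/
inductive Walk : T.State → List (T.Black × Bool) → T.State → Prop
  | nil (s : T.State) : Walk s [] s
  | cw {s t u : T.State} {b : T.Black} {l : List (T.Black × Bool)} :
      T.CWMoveAt s t b → Walk t l u → Walk s ((b, true) :: l) u
  | ccw {s t u : T.State} {b : T.Black} {l : List (T.Black × Bool)} :
      T.CWMoveAt t s b → Walk t l u → Walk s ((b, false) :: l) u

/-- Two states lie in the same connected component of the state transition
graph. -/
def Reaches (s t : T.State) : Prop := ∃ l, T.Walk s l t

/-- A walk consisting of clockwise moves only, about the listed black triangles. -/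
def CWWalk (s : T.State) (l : List T.Black) (t : T.State) : Prop :=
  T.Walk s (l.map fun b => (b, true)) t

/-- A state is recurrent if some non-empty sequence of clockwise moves starts
and ends at it. -/
def Recurrent (s : T.State) : Prop := ∃ l : List T.Black, l ≠ [] ∧ T.CWWalk s l s

/-- `s` belongs to an acyclic component of the state transition graph: no state
in its component is recurrent. -/
def InAcyclic (s : T.State) : Prop := ∀ t, T.Reaches s t → ¬ T.Recurrent t

/-- Two white triangles sharing an adjacent black triangle. -/
def WAdj (w w' : T.White) : Prop := ∃ c c', T.wadj w c = T.wadj w' c'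

/-- Rotation (by one step, in the direction induced by the orientation) of the
white triangles around the vertex `v`. -/
def rotAt (v : T.Vertex) (w : T.White) : T.White :=
  T.badj (T.wadj w (T.vcol v + 1)) (T.vcol v + 2)

/-- The combinatorial data encode a closed connected oriented surface: the
triangles form a connected complex and the link of every vertex is a single
cycle of triangles. -/
def Surface : Prop :=
  (∀ w w' : T.White, Relation.ReflTransGen T.WAdj w w') ∧
  ∀ (v : T.Vertex) (w w' : T.White), T.wvert w (T.vcol v) = v → T.wvert w' (T.vcol v) = v →
    ∃ k : ℕ, (T.rotAt v)^[k] w = w'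

/-- A planar trinity: a trinity on the sphere (Euler characteristic 2) with a
distinguished outer white triangle. -/
def Planar : Prop :=
  T.Surface ∧ T.outer.isSome ∧ Fintype.card T.Vertex = Fintype.card T.White + 2

/-- A toric trinity: a trinity on the torus (Euler characteristic 0), with all
triangles and vertices taking part in matchings. -/
def Toric : Prop :=
  T.Surface ∧ T.outer = none ∧ Fintype.card T.Vertex = Fintype.card T.White

/-- The configuration of a general clock move: three white triangles `W 0, W 1,
W 2` and three vertices `u 0, u 1, u 2` (one of each color) such that `W c`
contains the vertices `u c'` for both colors `c' ≠ c`; the three edges of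
colors `c` of the triangles `W c` then form a closed triangle of edges through
the vertices `u`, bounding a disk on the side opposite to the whites.
(For the boundary of a black triangle `b` this recovers `W = T.badj b`,
`u = T.bvert b`.) -/
def CombConfig (W : Fin 3 → T.White) (u : Fin 3 → T.Vertex) : Prop :=
  ∀ c c' : Fin 3, c' ≠ c → T.wvert (W c) c' = u c'

/-- A general clockwise move from `s` to `t`: about some clock-move
configuration whose three (non-outer) white triangles are matched with its
three vertices, the matching is switched from the clockwise pattern to the
counter-clockwise one, all other matches being kept. -/
def CWMove (s t : T.State) : Prop :=
  ∃ (W : Fin 3 → T.White) (u : Fin 3 → T.Vertex),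
    T.CombConfig W u ∧ (∀ c, ¬ T.IsOuter (W c)) ∧
    (∀ c, s.toFun (W c) = u (c + 1)) ∧ (∀ c, t.toFun (W c) = u (c + 2)) ∧
    ∀ w, (∀ c, w ≠ W c) → t.toFun w = s.toFun w

/-- `P` exhibits the closed triangle of edges determined by the clock-move
configuration `W` as separating: `P` is a two-coloring of the triangles which
changes value exactly across the three edges of the configuration, the white
triangles `W c` being on the `P`-side. -/
def ConfigCut (W : Fin 3 → T.White) (P : T.White ⊕ T.Black → Prop) : Prop :=
  (∀ (w : T.White) (c : Fin 3), (∀ c₀, ¬ (w = W c₀ ∧ c = c₀)) →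
    (P (Sum.inl w) ↔ P (Sum.inr (T.wadj w c)))) ∧
  (∀ c, P (Sum.inl (W c))) ∧ (∀ c, ¬ P (Sum.inr (T.wadj (W c) c)))

/-- A trinity is irreducible if it is not the trinity `F` with a single black
and a single white triangle, and it is not a nontrivial connected sum; i.e.
every separating closed triangle of edges cuts off a single triangle. -/
def Irreducible : Prop :=
  1 < Fintype.card T.White ∧
  ∀ (W : Fin 3 → T.White) (u : Fin 3 → T.Vertex) (P : T.White ⊕ T.Black → Prop),
    T.CombConfig W u → T.ConfigCut W P →
      (∃ b : T.Black, ∀ x, ¬ P x ↔ x = Sum.inr b) ∨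
      (∃ w : T.White, ∀ x, P x ↔ x = Sum.inl w)

/-! ### The directed dual graphs `G_X^*`

For a color `X`, the vertices of the directed graph `G_X^*` are the vertices of
the trinity of color `X` and its directed edges are in natural bijection with
the white triangles: the white triangle `w` corresponds to the dual edge of its
edge of color `X`, directed from the vertex of color `X` of the adjacent black
triangle `wadj w X` (its tail) to the vertex of color `X` of `w` (its head).
The arrows of a state pointing to vertices of color `X` are edges of `G_X^*`. -/

/-- The head of the edge of `G_X^*` corresponding to the white triangle `w`. -/
def head (X : Fin 3) (w : T.White) : T.Vertex := T.wvert w X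

/-- The tail of the edge of `G_X^*` corresponding to the white triangle `w`. -/
def tail (X : Fin 3) (w : T.White) : T.Vertex := T.bvert (T.wadj w X) X

/-- One-step reachability in `G_X^*` along edges from the set `A`. -/
def ARel (X : Fin 3) (A : Finset T.White) (a b : T.Vertex) : Prop :=
  ∃ w ∈ A, T.tail X w = a ∧ T.head X w = b

/-- `A` is a spanning arborescence of `G_X^*`, rooted at the root of color `X`
(the vertex of color `X` of the outer triangle `o`): a spanning tree all of
whose edges point away from the root. -/
def IsArborescence (X : Fin 3) (o : T.White) (A : Finset T.White) : Prop :=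
  (∀ w ∈ A, T.head X w ≠ T.wvert o X) ∧
  (∀ v : T.Vertex, T.vcol v = X → v ≠ T.wvert o X → ∃! w, w ∈ A ∧ T.head X w = v) ∧
  (∀ v : T.Vertex, T.vcol v = X → Relation.ReflTransGen (T.ARel X A) (T.wvert o X) v)

/-- One step of the tour tracing (counter-clockwise) the boundary of a small
neighborhood of the spanning tree `A` in `G_X^*`.  A position of the tour is a
dart `(w, d)`: the edge `w` of `G_X^*` together with a direction (`true`:
towards the head, `false`: towards the tail).  From the end of the dart one
rotates to the next edge-end around the vertex; if that edge belongs to `A` it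
is traversed away from the vertex, and otherwise its end is crossed (recorded
by bouncing back towards the vertex). -/
def tourStep (X : Fin 3) (A : Finset T.White) : T.White × Bool → T.White × Bool :=
  fun p =>
    if p.2 then
      let w' := T.badj (T.wadj p.1 (X + 1)) X
      (w', decide (w' ∈ A))
    else
      let w' := T.badj (T.wadj p.1 X) (X + 2)
      (w', decide (w' ∉ A))

/-- The position of the edge `w` of `G_X^*` in the ordering `<_A` determined by
the spanning arborescence `A`: the first time the boundary tour of a
neighborhood of `A` (started on the outer white triangle `o`, i.e. at the dart
arriving at the root through `o`) travels along `w` (if `w ∈ A`) or crosses an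
end of `w` (if `w ∉ A`). -/
noncomputable def ordIdx (X : Fin 3) (o : T.White) (A : Finset T.White) (w : T.White) : ℕ :=
  sInf {k : ℕ | ((T.tourStep X A)^[k] (o, true)).1 = w}

/-- `A` is the clocked arborescence of `G_X^*`: the spanning arborescence such
that for every non-root vertex `y` of color `X`, the edge of `A` pointing to
`y` is smallest, with respect to the ordering `<_A`, among all edges of
`G_X^*` terminating at `y`. -/
def IsClocked (X : Fin 3) (o : T.White) (A : Finset T.White) : Prop :=
  T.IsArborescence X o A ∧
    ∀ w ∈ A, ∀ w' : T.White, w' ≠ w → T.head X w' = T.head X w →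
      T.ordIdx X o A w < T.ordIdx X o A w'

/-! ### Wreaths (toric trinities) -/

/-- A nonempty set `C` of edges of `G_R^*` forming a single (directed) cycle:
at every red vertex the in-degree and out-degree in `C` agree and are at most
one, and `C` is connected. -/
def IsDirCycle (C : Finset T.White) : Prop :=
  C.Nonempty ∧
  (∀ v : T.Vertex, T.vcol v = 0 →
    (C.filter fun w => T.head 0 w = v).card = (C.filter fun w => T.tail 0 w = v).card ∧
    (C.filter fun w => T.head 0 w = v).card ≤ 1) ∧
  ∀ w ∈ C, ∀ w' ∈ C,
    Relation.ReflTransGen (fun a b => a ∈ C ∧ b ∈ C ∧ T.head 0 a = T.tail 0 b) w w'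

/-- The cycle `C` of edges of `G_R^*` separates the surface: the faces of
`G_R^*` (which correspond to the green and blue vertices of the trinity) can be
two-colored so that the two faces adjacent along an edge of `G_R^*` (namely the
faces of the green and the blue endpoint of the crossed red edge) get the same
color exactly when the edge does not belong to `C`. -/
def SeparatingSet (C : Finset T.White) : Prop :=
  ∃ P : T.Vertex → Prop,
    (∀ w : T.White, w ∉ C → (P (T.wvert w 1) ↔ P (T.wvert w 2))) ∧
    ∀ w ∈ C, ¬ (P (T.wvert w 1) ↔ P (T.wvert w 2))

/-- A wreath: a set `W` of edges of the directed dual graph `G_R^*` such that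
every red vertex has exactly one edge of `W` pointing to it and the edges of
`W` form no separating cycle. -/
def IsWreath (W : Finset T.White) : Prop :=
  (∀ v : T.Vertex, T.vcol v = 0 → ∃! w, w ∈ W ∧ T.head 0 w = v) ∧
  ∀ C ⊆ W, T.IsDirCycle C → ¬ T.SeparatingSet C

end Trinity
namespace Trinity

variable {T : Trinity}

theorem State.toFun_injective : Function.Injective (State.toFun (T := T)) := by
  rintro ⟨f, _, _, _, _, _⟩ ⟨g, _, _, _, _, _⟩ h
  cases h; rfl

instance : Finite T.State := Finite.of_injective _ State.toFun_injective

theorem wvert_inj (w : T.White) {c c' : Fin 3} (h : T.wvert w c = T.wvert w c') : c = c' := by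
  have := congrArg T.vcol h
  rwa [T.wvert_col, T.wvert_col] at this

theorem bvert_inj (b : T.Black) {c c' : Fin 3} (h : T.bvert b c = T.bvert b c') : c = c' := by
  have := congrArg T.vcol h
  rwa [T.bvert_col, T.bvert_col] at this

theorem bvert_eq_wvert (b : T.Black) (c x : Fin 3) (hx : x ≠ c) :
    T.bvert b x = T.wvert (T.badj b c) x := by
  conv_lhs => rw [← T.wadj_badj b c]
  exact T.bvert_wadj _ _ _ hx

theorem State.IsCW.badj_inj {s : T.State} {b : T.Black} (hcw : s.IsCW b) {c c' : Fin 3}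
    (h : T.badj b c = T.badj b c') : c = c' := by
  have h1 := hcw.2 c
  have h2 := hcw.2 c'
  rw [h] at h1
  have := bvert_inj b (h1.symm.trans h2)
  exact add_right_cancel this

theorem State.IsCW.not_outer {s : T.State} {b : T.Black} (hcw : s.IsCW b) (c : Fin 3) :
    ¬ T.IsOuter (T.badj b c) := by
  intro ho
  have hne : T.badj b (c + 1) ≠ T.badj b c := by
    intro h
    exact (by decide : ∀ x : Fin 3, ¬ x + 1 = x) c (hcw.badj_inj h)
  have hno : ¬ T.IsOuter (T.badj b (c + 1)) := by
    intro ho'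
    exact hne (Option.some_injective _ (ho'.symm.trans ho))
  apply s.not_root _ hno
  have hv : s.toFun (T.badj b (c + 1)) = T.wvert (T.badj b c) (c + 2) := by
    rw [hcw.2 (c + 1), (by decide : ∀ x : Fin 3, x + 1 + 1 = x + 2) c]
    exact bvert_eq_wvert b c (c + 2) ((by decide : ∀ x : Fin 3, x + 2 ≠ x) c)
  rw [hv]
  exact ⟨T.badj b c, ho, c + 2, rfl⟩
/-- The result of a clockwise move at `b`, as a function. -/
noncomputable def moveFun (s : T.State) (b : T.Black) : T.White → T.Vertex :=
  fun w => if h : ∃ c, w = T.badj b c then T.bvert b (h.choose + 2) else s.toFun w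

theorem moveFun_badj {s : T.State} {b : T.Black} (hcw : s.IsCW b) (c : Fin 3) :
    moveFun s b (T.badj b c) = T.bvert b (c + 2) := by
  have h : ∃ c', T.badj b c = T.badj b c' := ⟨c, rfl⟩
  rw [moveFun, dif_pos h]
  congr 1
  have := hcw.badj_inj h.choose_spec
  rw [← this]

theorem moveFun_not_badj (s : T.State) (b : T.Black) {w : T.White}
    (hw : ∀ c, w ≠ T.badj b c) : moveFun s b w = s.toFun w := by
  rw [moveFun, dif_neg]
  rintro ⟨c, hc⟩
  exact hw c hc

/-- `s.toFun (T.badj b (c+1)) = T.bvert b (c+2)` under `IsCW`. -/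
theorem State.IsCW.match_eq {s : T.State} {b : T.Black} (hcw : s.IsCW b) (c : Fin 3) :
    s.toFun (T.badj b (c + 1)) = T.bvert b (c + 2) := by
  rw [hcw.2 (c + 1), (by decide : ∀ x : Fin 3, x + 1 + 1 = x + 2) c]

/-- The state resulting from a clockwise move at `b`. -/
noncomputable def moveState (s : T.State) {b : T.Black} (hcw : s.IsCW b) : T.State where
  toFun := moveFun s b
  incident := by
    intro w
    by_cases h : ∃ c, w = T.badj b c
    · obtain ⟨c, rfl⟩ := h
      exact ⟨c + 2, by
        rw [moveFun_badj hcw]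
        exact bvert_eq_wvert b c (c + 2) ((by decide : ∀ x : Fin 3, x + 2 ≠ x) c)⟩
    · push_neg at h
      rw [moveFun_not_badj s b h]
      exact s.incident w
  injOn := by
    intro w w' hw hw' heq
    by_cases h : ∃ c, w = T.badj b c
    · obtain ⟨c, rfl⟩ := h
      rw [moveFun_badj hcw] at heq
      by_cases h' : ∃ c', w' = T.badj b c'
      · obtain ⟨c', rfl⟩ := h'
        rw [moveFun_badj hcw] at heq
        rw [add_right_cancel (bvert_inj b heq)]
      · push_neg at h'
        rw [moveFun_not_badj s b h'] at heq
        exfalso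
        refine h' (c + 1) (s.injOn w' (T.badj b (c + 1)) hw' (hcw.not_outer (c + 1)) ?_)
        rw [hcw.match_eq c, heq]
    · push_neg at h
      rw [moveFun_not_badj s b h] at heq
      by_cases h' : ∃ c', w' = T.badj b c'
      · obtain ⟨c', rfl⟩ := h'
        rw [moveFun_badj hcw] at heq
        exfalso
        exact h (c' + 1) (s.injOn w (T.badj b (c' + 1)) hw (hcw.not_outer (c' + 1))
          (by rw [hcw.match_eq c', heq]))
      · push_neg at h'
        rw [moveFun_not_badj s b h'] at heq
        exact s.injOn w w' hw hw' heq
  not_root := by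
    intro w hw
    by_cases h : ∃ c, w = T.badj b c
    · obtain ⟨c, rfl⟩ := h
      rw [moveFun_badj hcw, ← hcw.match_eq c]
      exact s.not_root _ (hcw.not_outer (c + 1))
    · push_neg at h
      rw [moveFun_not_badj s b h]
      exact s.not_root w hw
  surj := by
    intro v hv
    obtain ⟨w, hwo, hwv⟩ := s.surj v hv
    by_cases h : ∃ c, w = T.badj b c
    · obtain ⟨c, rfl⟩ := h
      refine ⟨T.badj b (c + 2), hcw.not_outer (c + 2), ?_⟩
      rw [moveFun_badj hcw, (by decide : ∀ x : Fin 3, x + 2 + 2 = x + 1) c, ← hcw.2 c, hwv]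
    · push_neg at h
      exact ⟨w, hwo, by rw [moveFun_not_badj s b h, hwv]⟩
  outer_spec := by
    intro w hw
    have h : ∀ c, w ≠ T.badj b c := by
      intro c hc
      exact hcw.not_outer c (hc ▸ hw)
    rw [moveFun_not_badj s b h]
    exact s.outer_spec w hw

theorem cwMoveAt_moveState (s : T.State) {b : T.Black} (hcw : s.IsCW b) :
    T.CWMoveAt s (moveState s hcw) b :=
  ⟨hcw, fun c => moveFun_badj hcw c, fun _ hw => moveFun_not_badj s b hw⟩

theorem CWMoveAt.unique {s t t' : T.State} {b : T.Black}
    (h : T.CWMoveAt s t b) (h' : T.CWMoveAt s t' b) : t = t' := by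
  apply State.toFun_injective
  funext w
  by_cases hw : ∃ c, w = T.badj b c
  · obtain ⟨c, rfl⟩ := hw
    rw [h.2.1 c, h'.2.1 c]
  · push_neg at hw
    rw [h.2.2 w hw, h'.2.2 w hw]

theorem disjoint_badj {s : T.State} {b b' : T.Black} (h : s.IsCW b) (h' : s.IsCW b')
    (hbb : b ≠ b') (c c' : Fin 3) : T.badj b c ≠ T.badj b' c' := by
  intro he
  have h1 := h.2 c
  have h2 := h'.2 c'
  rw [he] at h1
  rw [bvert_eq_wvert b c (c + 1) ((by decide : ∀ x : Fin 3, x + 1 ≠ x) c), he] at h1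
  rw [bvert_eq_wvert b' c' (c' + 1) ((by decide : ∀ x : Fin 3, x + 1 ≠ x) c')] at h2
  have hcc : c = c' := add_right_cancel (wvert_inj _ (h1.symm.trans h2))
  subst hcc
  apply hbb
  rw [← T.wadj_badj b c, he, T.wadj_badj]

theorem stillCW {s t : T.State} {b b' : T.Black} (hbb : b ≠ b')
    (h : T.CWMoveAt s t b) (h' : s.IsCW b') : t.IsCW b' := by
  have hcw := h.1
  constructor
  · intro w hwo hab
    by_cases hw : ∃ c, w = T.badj b c
    · obtain ⟨c, rfl⟩ := hw
      rw [State.arrowBlack, h.2.1 c, T.bvert_col] at hab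
      refine disjoint_badj hcw h' hbb c (c + 2) ?_
      rw [← hab, T.badj_wadj]
    · push_neg at hw
      apply h'.1 w hwo
      rw [State.arrowBlack, ← h.2.2 w hw]
      exact hab
  · intro c
    have hne : ∀ c'', T.badj b' c ≠ T.badj b c'' := fun c'' =>
      disjoint_badj h' hcw hbb.symm c c''
    rw [h.2.2 _ hne]
    exact h'.2 c

theorem diamond {s t t' : T.State} {b b' : T.Black} (hbb : b ≠ b')
    (h : T.CWMoveAt s t b) (h' : T.CWMoveAt s t' b') :
    ∃ u, T.CWMoveAt t u b' ∧ T.CWMoveAt t' u b := by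
  have ht : t.IsCW b' := stillCW hbb h h'.1
  refine ⟨moveState t ht, cwMoveAt_moveState t ht, stillCW hbb.symm h' h.1, ?_, ?_⟩
  · intro c
    have hne : ∀ c', T.badj b c ≠ T.badj b' c' := fun c' =>
      disjoint_badj h.1 h'.1 hbb c c'
    show moveFun t b' (T.badj b c) = _
    rw [moveFun_not_badj t b' hne]
    exact h.2.1 c
  · intro w hw
    show moveFun t b' w = _
    by_cases hw' : ∃ c, w = T.badj b' c
    · obtain ⟨c, rfl⟩ := hw'
      rw [moveFun_badj ht c, h'.2.1 c]
    · push_neg at hw'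
      rw [moveFun_not_badj t b' hw', h.2.2 w hw, ← h'.2.2 w hw']
/-- A clockwise-only walk, as an inductive predicate over the list of black
triangles used. -/
inductive CWW (T : Trinity) : T.State → List T.Black → T.State → Prop
  | nil (s : T.State) : CWW T s [] s
  | cons {s t u : T.State} {b : T.Black} {l : List T.Black} :
      T.CWMoveAt s t b → CWW T t l u → CWW T s (b :: l) u

theorem CWW.toWalk {s u : T.State} {l : List T.Black} (h : CWW T s l u) :
    T.Walk s (l.map fun b => (b, true)) u := by
  induction h with
  | nil s => exact Walk.nil s
  | cons hm _ ih => exact Walk.cw hm ih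

theorem CWW.append {s t u : T.State} {l l' : List T.Black}
    (h : CWW T s l t) (h' : CWW T t l' u) : CWW T s (l ++ l') u := by
  induction h with
  | nil s => exact h'
  | cons hm _ ih => exact CWW.cons hm (ih h')

theorem Walk.append' {s t u : T.State} {l l' : List (T.Black × Bool)}
    (h : T.Walk s l t) (h' : T.Walk t l' u) : T.Walk s (l ++ l') u := by
  induction h with
  | nil s => exact h'
  | cw hm _ ih => exact Walk.cw hm (ih h')
  | ccw hm _ ih => exact Walk.ccw hm (ih h')

/-- One clockwise move relates two states. -/
def Step (T : Trinity) (u v : T.State) : Prop := ∃ b, T.CWMoveAt u v b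

theorem reaches_step {s₀ u v : T.State} {b : T.Black} (hu : T.Reaches s₀ u)
    (h : T.CWMoveAt u v b) : T.Reaches s₀ v := by
  obtain ⟨l, hl⟩ := hu
  exact ⟨l ++ [(b, true)], hl.append' (Walk.cw h (Walk.nil v))⟩

theorem reaches_step_ccw {s₀ u v : T.State} {b : T.Black} (hu : T.Reaches s₀ u)
    (h : T.CWMoveAt v u b) : T.Reaches s₀ v := by
  obtain ⟨l, hl⟩ := hu
  exact ⟨l ++ [(b, false)], hl.append' (Walk.ccw h (Walk.nil v))⟩

theorem transGen_to_cww {u v : T.State} (h : Relation.TransGen (Step T) u v) :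
    ∃ l, l ≠ [] ∧ CWW T u l v := by
  induction h with
  | single hs =>
    obtain ⟨b, hb⟩ := hs
    exact ⟨[b], by simp, CWW.cons hb (CWW.nil _)⟩
  | tail _ hs ih =>
    obtain ⟨b, hb⟩ := hs
    obtain ⟨l, hne, hl⟩ := ih
    exact ⟨l ++ [b], by simp, hl.append (CWW.cons hb (CWW.nil _))⟩

theorem wf_aux {s₀ : T.State} (hacyc : T.InAcyclic s₀) :
    WellFounded (fun v u : {x : T.State // T.Reaches s₀ x} => Step T u.1 v.1) := by
  set r := fun v u : {x : T.State // T.Reaches s₀ x} => Step T u.1 v.1 with hr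
  have irr : ∀ u, ¬ Relation.TransGen r u u := by
    rintro ⟨u, hu⟩ h
    have h2 : Relation.TransGen (Function.swap (Step T)) u u :=
      Relation.TransGen.lift (p := Function.swap (Step T)) Subtype.val (fun _ _ hab => hab) _ _ h
    rw [Relation.transGen_swap] at h2
    have h' : Relation.TransGen (Step T) u u := h2
    obtain ⟨l, hne, hl⟩ := transGen_to_cww h'
    exact hacyc u hu ⟨l, hne, hl.toWalk⟩
  haveI : IsIrrefl _ (Relation.TransGen r) := ⟨irr⟩
  exact Subrelation.wf (fun h => Relation.TransGen.single h)
    (Finite.wellFounded_of_trans_of_irrefl _)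

/-- No clockwise move is available. -/
def NormalS (T : Trinity) (u : T.State) : Prop := ∀ v, ¬ Step T u v

theorem exists_nf {s₀ : T.State} (hacyc : T.InAcyclic s₀) :
    ∀ u, T.Reaches s₀ u → ∃ l n, CWW T u l n ∧ NormalS T n := by
  have wf := wf_aux hacyc
  suffices h : ∀ p : {x : T.State // T.Reaches s₀ x}, ∃ l n, CWW T p.1 l n ∧ NormalS T n by
    intro u hu; exact h ⟨u, hu⟩
  intro p
  induction p using wf.induction with
  | _ p ih =>
    obtain ⟨u, hu⟩ := p
    by_cases hs : ∃ v, Step T u v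
    · obtain ⟨v, b, hb⟩ := hs
      obtain ⟨l, n, hl, hn⟩ := ih ⟨v, reaches_step hu hb⟩ ⟨b, hb⟩
      exact ⟨b :: l, n, CWW.cons hb hl, hn⟩
    · push_neg at hs
      exact ⟨[], u, CWW.nil u, fun v hv => hs v hv⟩
theorem counts_eq {s₀ : T.State} (hacyc : T.InAcyclic s₀) :
    ∀ u, T.Reaches s₀ u → ∀ l₁ n₁, CWW T u l₁ n₁ → NormalS T n₁ →
      ∀ l₂ n₂, CWW T u l₂ n₂ → NormalS T n₂ → ∀ b, l₁.count b = l₂.count b := by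
  have wf := wf_aux hacyc
  suffices h : ∀ p : {x : T.State // T.Reaches s₀ x},
      ∀ l₁ n₁, CWW T p.1 l₁ n₁ → NormalS T n₁ →
      ∀ l₂ n₂, CWW T p.1 l₂ n₂ → NormalS T n₂ → ∀ b, l₁.count b = l₂.count b by
    intro u hu; exact h ⟨u, hu⟩
  intro p
  induction p using wf.induction with
  | _ p ih =>
    obtain ⟨u, hu⟩ := p
    intro l₁ n₁ h₁ hn₁ l₂ n₂ h₂ hn₂ b
    cases h₁ with
    | nil =>
      cases h₂ with
      | nil => rfl
      | cons hb₂ h₂' => exact absurd ⟨_, hb₂⟩ (hn₁ _)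
    | cons hb₁ h₁' =>
      cases h₂ with
      | nil => exact absurd ⟨_, hb₁⟩ (hn₂ _)
      | cons hb₂ h₂' =>
        rename_i v₁ b₁ l₁' v₂ b₂ l₂'
        have hv₁ : T.Reaches s₀ v₁ := reaches_step hu hb₁
        have hv₂ : T.Reaches s₀ v₂ := reaches_step hu hb₂
        by_cases hbe : b₁ = b₂
        · subst hbe
          have hvv : v₁ = v₂ := hb₁.unique hb₂
          subst hvv
          have e := ih ⟨v₁, hv₁⟩ ⟨b₁, hb₁⟩ l₁' n₁ h₁' hn₁ l₂' n₂ h₂' hn₂ b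
          simp [List.count_cons, e]
        · obtain ⟨w, hw₁, hw₂⟩ := diamond hbe hb₁ hb₂
          have hwD : T.Reaches s₀ w := reaches_step hv₁ hw₁
          obtain ⟨m, n, hm, hn⟩ := exists_nf hacyc w hwD
          have e₁ := ih ⟨v₁, hv₁⟩ ⟨b₁, hb₁⟩ l₁' n₁ h₁' hn₁ (b₂ :: m) n
            (CWW.cons hw₁ hm) hn b
          have e₂ := ih ⟨v₂, hv₂⟩ ⟨b₂, hb₂⟩ l₂' n₂ h₂' hn₂ (b₁ :: m) n
            (CWW.cons hw₂ hm) hn b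
          simp only [List.count_cons, e₁, e₂]
          split_ifs <;> omega

open Classical in
noncomputable def mu (T : Trinity) (u : T.State) (b : T.Black) : ℕ :=
  if h : ∃ l, ∃ n, CWW T u l n ∧ NormalS T n then h.choose.count b else 0

theorem mu_step {s₀ u v : T.State} {b : T.Black} (hacyc : T.InAcyclic s₀)
    (hu : T.Reaches s₀ u) (h : T.CWMoveAt u v b) (b' : T.Black) :
    mu T u b' = mu T v b' + (if b' = b then 1 else 0) := by
  have hv : T.Reaches s₀ v := reaches_step hu h
  have hex_u : ∃ l, ∃ n, CWW T u l n ∧ NormalS T n := exists_nf hacyc u hu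
  have hex_v : ∃ l, ∃ n, CWW T v l n ∧ NormalS T n := exists_nf hacyc v hv
  simp only [mu]
  rw [dif_pos hex_u, dif_pos hex_v]
  obtain ⟨nu, hu', hnu⟩ := hex_u.choose_spec
  obtain ⟨nv, hv', hnv⟩ := hex_v.choose_spec
  have e := counts_eq hacyc u hu _ _ hu' hnu (b :: hex_v.choose) nv
    (CWW.cons h hv') hnv b'
  rw [e, List.count_cons]
  by_cases hbe : b' = b
  · subst hbe; simp
  · simp [hbe, Ne.symm hbe]

theorem walk_mu {s₀ : T.State} (hacyc : T.InAcyclic s₀) {u v : T.State}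
    {l : List (T.Black × Bool)} (hw : T.Walk u l v) (hu : T.Reaches s₀ u) (b : T.Black) :
    (l.count (b, true) : ℤ) - (l.count (b, false) : ℤ) = (mu T u b : ℤ) - mu T v b := by
  induction hw with
  | nil s => simp
  | @cw s t u' b₀ l' h _ ih =>
    have ht : T.Reaches s₀ t := reaches_step hu h
    have e := ih ht
    have e2 := mu_step hacyc hu h b
    have c2 : List.count (b, false) ((b₀, true) :: l') = List.count (b, false) l' := by
      simp [List.count_cons]
    by_cases hbe : b = b₀
    · subst hbe
      have c1 : List.count (b, true) ((b, true) :: l') = List.count (b, true) l' + 1 := by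
        simp [List.count_cons]
      rw [if_pos rfl] at e2
      rw [c1, c2, e2]
      push_cast
      omega
    · have c1 : List.count (b, true) ((b₀, true) :: l') = List.count (b, true) l' := by
        simp [List.count_cons, hbe, Ne.symm hbe]
      rw [if_neg hbe, add_zero] at e2
      rw [c1, c2, e2]
      omega
  | @ccw s t u' b₀ l' h _ ih =>
    have ht : T.Reaches s₀ t := reaches_step_ccw hu h
    have e := ih ht
    have e2 := mu_step hacyc ht h b
    have c1 : List.count (b, true) ((b₀, false) :: l') = List.count (b, true) l' := by
      simp [List.count_cons]
    by_cases hbe : b = b₀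
    · subst hbe
      have c2 : List.count (b, false) ((b, false) :: l') = List.count (b, false) l' + 1 := by
        simp [List.count_cons]
      rw [if_pos rfl] at e2
      rw [c1, c2]
      push_cast
      omega
    · have c2 : List.count (b, false) ((b₀, false) :: l') = List.count (b, false) l' := by
        simp [List.count_cons, hbe, Ne.symm hbe]
      rw [if_neg hbe, add_zero] at e2
      rw [c1, c2]
      omega

end Trinity
/-- Lemma 3.2.  In an acyclic connected component of the
state transition graph of a planar or toric trinity, if two paths connect the
same pair of states, then the algebraic multiplicity (exponent sum of clockwise
minus counter-clockwise moves) of each black triangle is the same along the two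
paths. -/
theorem walks_with_equal_endpoints_have_equal_multiplicities
    (T : Trinity) (hpt : T.Planar ∨ T.Toric) (s t : T.State) (hacyc : T.InAcyclic s)
    (l₁ l₂ : List (T.Black × Bool)) (h₁ : T.Walk s l₁ t) (h₂ : T.Walk s l₂ t) :
    ∀ b : T.Black,
      (l₁.count (b, true) : ℤ) - (l₁.count (b, false) : ℤ) =
      (l₂.count (b, true) : ℤ) - (l₂.count (b, false) : ℤ) := by
  intro b
  have hss : T.Reaches s s := ⟨[], Trinity.Walk.nil s⟩
  rw [Trinity.walk_mu hacyc h₁ hss b, Trinity.walk_mu hacyc h₂ hss b]
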